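/- arXiv:2603.07284 — 2 statements merged into one kernel-verified Lean document; each statement's English description precedes it below -/
import Mathlib

section
/- For all integers n, r with 0 ≤ r ≤ n−2, ∑_{k=0}^{n} ∑_{i=0}^{r+1} s(r+1,i) · k^i · p_n(k) = n!, where s(q,i) is the signed Stirling number of the first kind. -/
open Finset

/-- `p n k` : number of permutations of `{1,...,n}` with exactly `k` fixed points. -/
def p (n k : ℕ) : ℕ :=
  Fintype.card {σ : Equiv.Perm (Fin n) // (Finset.univ.filter fun x => σ x = x).card = k}

/-- Signed Stirling numbers of the first kind:
`x(x-1)⋯(x-q+1) = ∑ i, s1 q i * x^i`. -/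
noncomputable def s1 (q i : ℕ) : ℤ := (descPochhammer ℤ q).coeff i

/-- Pairs (σ, list of m distinct fixed points of σ) ≃ pairs (embedding, σ fixing its range). -/
def pairEquiv (n m : ℕ) :
    (Σ σ : Equiv.Perm (Fin n), (Fin m ↪ {x // σ x = x})) ≃
    (Σ f : Fin m ↪ Fin n, {σ : Equiv.Perm (Fin n) // ∀ j, σ (f j) = f j}) where
  toFun := fun ⟨σ, e⟩ => ⟨e.trans (Function.Embedding.subtype _), σ, fun j => (e j).2⟩
  invFun := fun ⟨f, σ, h⟩ =>
    ⟨σ, ⟨fun j => ⟨f j, h j⟩, fun a b hab => f.injective (by simpa using hab)⟩⟩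
  left_inv := fun ⟨σ, e⟩ => rfl
  right_inv := fun ⟨f, σ, h⟩ => rfl

lemma card_fixing (n m : ℕ) (hm : m ≤ n) (f : Fin m ↪ Fin n) :
    Fintype.card {σ : Equiv.Perm (Fin n) // ∀ j, σ (f j) = f j} = (n - m).factorial := by
  classical
  have e1 : {σ : Equiv.Perm (Fin n) // ∀ a, ¬ (a ∉ Finset.image f Finset.univ) → σ a = a} ≃
      {σ : Equiv.Perm (Fin n) // ∀ j, σ (f j) = f j} := by
    apply Equiv.subtypeEquivRight
    intro σ
    constructor
    · intro h j
      exact h (f j) (by simp)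
    · intro h a ha
      rw [not_not, Finset.mem_image] at ha
      obtain ⟨j, -, rfl⟩ := ha
      exact h j
  have e2 := (Equiv.Perm.subtypeEquivSubtypePerm
      (fun a : Fin n => a ∉ Finset.image f Finset.univ)).trans e1
  rw [← Fintype.card_congr e2, Fintype.card_perm, Fintype.card_subtype_compl,
    Fintype.card_fin]
  have : Fintype.card {x // x ∈ Finset.image f Finset.univ} = m := by
    rw [Fintype.card_coe, Finset.card_image_of_injective _ f.injective, Finset.card_univ,
      Fintype.card_fin]
  rw [this]

lemma moment_eq (n m : ℕ) (hm : m ≤ n) :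
    ∑ σ : Equiv.Perm (Fin n),
      ((Finset.univ.filter fun x => σ x = x).card).descFactorial m = n.factorial := by
  classical
  have key : ∀ σ : Equiv.Perm (Fin n),
      ((Finset.univ.filter fun x => σ x = x).card).descFactorial m
        = Fintype.card (Fin m ↪ {x // σ x = x}) := by
    intro σ
    rw [Fintype.card_embedding_eq, Fintype.card_fin, Fintype.card_subtype]
  simp_rw [key]
  rw [← Fintype.card_sigma, Fintype.card_congr (pairEquiv n m), Fintype.card_sigma]
  simp_rw [card_fixing n m hm]
  rw [Finset.sum_const, Finset.card_univ, Fintype.card_embedding_eq, Fintype.card_fin,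
    Fintype.card_fin, smul_eq_mul, mul_comm, Nat.factorial_mul_descFactorial hm]

lemma sum_p_descFactorial (n m : ℕ) (hm : m ≤ n) :
    ∑ k ∈ Finset.range (n + 1), p n k * k.descFactorial m = n.factorial := by
  classical
  have hp : ∀ k, p n k = (Finset.univ.filter
      fun σ : Equiv.Perm (Fin n) => (Finset.univ.filter fun x => σ x = x).card = k).card := by
    intro k; rw [p, Fintype.card_subtype]
  simp_rw [hp]
  rw [← moment_eq n m hm]
  have hfib := Finset.sum_fiberwise_eq_sum_filter Finset.univ (Finset.range (n+1))
    (fun σ : Equiv.Perm (Fin n) => (Finset.univ.filter fun x => σ x = x).card)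
    (fun σ => ((Finset.univ.filter fun x => σ x = x).card).descFactorial m)
  have huniv : (Finset.univ.filter fun σ : Equiv.Perm (Fin n) =>
      (Finset.univ.filter fun x => σ x = x).card ∈ Finset.range (n+1)) = Finset.univ := by
    ext σ
    simp only [Finset.mem_filter, Finset.mem_univ, true_and, Finset.mem_range, iff_true]
    exact Nat.lt_succ_of_le ((Finset.card_filter_le _ _).trans (by simp))
  rw [huniv] at hfib
  rw [← hfib]
  apply Finset.sum_congr rfl
  intro k _
  rw [Finset.sum_congr rfl (fun σ hσ => by
    rw [(Finset.mem_filter.mp hσ).2]), Finset.sum_const, smul_eq_mul]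

theorem stmt13 (n r : ℕ) (hr : r + 2 ≤ n) :
    ∑ k ∈ Finset.range (n + 1), ∑ i ∈ Finset.range (r + 2),
        s1 (r + 1) i * (k : ℤ) ^ i * p n k = n.factorial := by
  have inner : ∀ k : ℕ, ∑ i ∈ Finset.range (r + 2), s1 (r + 1) i * (k : ℤ) ^ i
      = (k.descFactorial (r + 1) : ℤ) := by
    intro k
    rw [← descPochhammer_eval_eq_descFactorial ℤ k (r + 1)]
    rw [Polynomial.eval_eq_sum_range' (n := r + 2)
      (by rw [descPochhammer_natDegree]; omega)]
    rfl
  have step : ∀ k : ℕ, ∑ i ∈ Finset.range (r + 2), s1 (r + 1) i * (k : ℤ) ^ i * p n k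
      = ((p n k * k.descFactorial (r + 1) : ℕ) : ℤ) := by
    intro k
    rw [← Finset.sum_mul, inner k]
    push_cast
    ring
  simp_rw [step]
  rw [← Nat.cast_sum]
  exact_mod_cast congrArg (Nat.cast : ℕ → ℤ) (sum_p_descFactorial n (r+1) (by omega))
end

section
/- For all natural numbers q and n with n ≥ max(q,1), n! · B_q = ∑_{k=0}^{n} ∑_{l=0}^{⌊(k−1)q/k⌋} ∑_{i=0}^{n−k} (−1)^{l+i} · (n!/(k! i!)) · C(q,l) · C(k(q−l), q), as an identity of rational numbers. -/
open Finset

/-- Bell number: number of partitions of a set with `q` elements. -/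
def Bell (q : ℕ) : ℕ := Fintype.card (Finpartition (Finset.univ : Finset (Fin q)))

open Finset Polynomial

lemma vassilev_full (k q : ℕ) :
    ∑ l ∈ range (q + 1), (-1 : ℚ) ^ l * q.choose l * ((k * (q - l)).choose q) = (k : ℚ) ^ q := by
  have key : ∑ j ∈ range (q + 1), (-1 : ℚ) ^ (q - j) * q.choose j * ((k * j).choose q)
      = (k : ℚ) ^ q := by
    have hpoly : ((1 + X : ℚ[X]) ^ k - 1) ^ q
        = ∑ j ∈ range (q + 1), C ((-1 : ℚ) ^ (q - j) * (q.choose j : ℚ)) * (1 + X) ^ (k * j) := by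
      rw [sub_eq_add_neg, add_pow]
      refine Finset.sum_congr rfl fun j hj => ?_
      rw [pow_mul, map_mul, map_pow, map_neg, map_one, Polynomial.C_eq_natCast]
      ring
    have lhs_coeff : (((1 + X : ℚ[X]) ^ k - 1) ^ q).coeff q = (k : ℚ) ^ q := by
      have hgeo : ((1 + X : ℚ[X]) ^ k - 1) = (∑ i ∈ range k, (1 + X : ℚ[X]) ^ i) * X := by
        have := geom_sum_mul (1 + X : ℚ[X]) k
        rw [add_sub_cancel_left] at this
        exact this.symm
      rw [hgeo, mul_pow]
      have h2 := Polynomial.coeff_mul_X_pow ((∑ i ∈ range k, (1 + X : ℚ[X]) ^ i) ^ q) q 0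
      rw [zero_add] at h2
      rw [h2, Polynomial.coeff_zero_eq_eval_zero, eval_pow, eval_finset_sum]
      simp
    have rhs_coeff : ((∑ j ∈ range (q + 1),
        C ((-1 : ℚ) ^ (q - j) * (q.choose j : ℚ)) * (1 + X) ^ (k * j)) : ℚ[X]).coeff q
        = ∑ j ∈ range (q + 1), (-1 : ℚ) ^ (q - j) * q.choose j * ((k * j).choose q) := by
      rw [Polynomial.finset_sum_coeff]
      refine Finset.sum_congr rfl fun j hj => ?_
      rw [Polynomial.coeff_C_mul, Polynomial.coeff_one_add_X_pow]
    rw [← lhs_coeff, hpoly, rhs_coeff]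
  have hre := Finset.sum_range_reflect
    (fun j => (-1 : ℚ) ^ (q - j) * q.choose j * ((k * j).choose q)) (q + 1)
  rw [← key, ← hre]
  refine Finset.sum_congr rfl fun l hl => ?_
  simp only [Finset.mem_range] at hl
  have hlq : l ≤ q := by omega
  rw [show q + 1 - 1 - l = q - l by omega, Nat.sub_sub_self hlq, Nat.choose_symm hlq]

open Finset Equiv

-- truncation
lemma vassilev_trunc (k q : ℕ) :
    ∑ l ∈ range ((k - 1) * q / k + 1), (-1 : ℚ) ^ l * q.choose l * ((k * (q - l)).choose q)
      = ∑ l ∈ range (q + 1), (-1 : ℚ) ^ l * q.choose l * ((k * (q - l)).choose q) := by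
  apply Finset.sum_subset
  · apply Finset.range_subset_range.2
    have : (k - 1) * q / k ≤ q := by
      rcases Nat.eq_zero_or_pos k with hk | hk
      · simp [hk]
      · calc (k - 1) * q / k ≤ k * q / k := Nat.div_le_div_right (Nat.mul_le_mul_right _ (Nat.sub_le _ _))
          _ = q := Nat.mul_div_cancel_left _ hk
    omega
  · intro x hx hx'
    simp only [Finset.mem_range] at hx hx'
    have hxq : x ≤ q := by omega
    have hlt : k * (q - x) < q := by
      rcases Nat.eq_zero_or_pos k with hk | hk
      · subst hk; simp only [Nat.zero_mul]; omega
      · have h1 : (k - 1) * q / k < x := by omega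
        have h2 : (k - 1) * q < x * k := (Nat.div_lt_iff_lt_mul hk).1 h1
        have h3 : (k - 1) * q = k * q - q := by
          rw [Nat.sub_mul, Nat.one_mul]
        have h7 : q ≤ k * q := Nat.le_mul_of_pos_left q hk
        have hq : 0 < q := lt_of_lt_of_le (Nat.lt_of_le_of_lt (Nat.zero_le _) h1) hxq
        have h2' : k * q - q < k * x := by
          rw [← h3, Nat.mul_comm k x]; exact h2
        rw [Nat.mul_sub]
        rcases le_or_gt (k * x) (k * q) with hle | hlt
        · rw [tsub_lt_iff_right hle]
          have h8 := Nat.add_lt_add_left h2' q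
          rwa [Nat.add_sub_cancel' h7] at h8
        · rw [Nat.sub_eq_zero_of_le hlt.le]
          exact hq
    rw [Nat.choose_eq_zero_of_lt hlt]
    simp

open Finset Equiv Function

lemma card_perm_fixed (n : ℕ) (S : Finset (Fin n)) :
    (univ.filter (fun σ : Equiv.Perm (Fin n) => univ.filter (fun x => σ x = x) = S)).card
      = numDerangements (n - S.card) := by
  classical
  rw [← Fintype.card_subtype]
  have e1 : {σ : Equiv.Perm (Fin n) // univ.filter (fun x => σ x = x) = S}
      ≃ derangements {x : Fin n // x ∉ S} := by
    refine (Equiv.subtypeEquivRight ?_).trans (derangements.subtypeEquiv (fun a => a ∉ S)).symm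
    intro σ
    rw [Finset.ext_iff]
    constructor
    · intro hh a
      have := hh a
      simp only [Finset.mem_filter, Finset.mem_univ, true_and] at this
      simp [not_not, Function.mem_fixedPoints, Function.IsFixedPt, this]
    · intro hh a
      have := hh a
      simp only [not_not, Function.mem_fixedPoints, Function.IsFixedPt] at this
      simp [Finset.mem_filter, this]
  rw [Fintype.card_congr e1, card_derangements_eq_numDerangements]
  congr 1
  rw [Fintype.card_subtype_compl, Fintype.card_fin]
  rw [Fintype.card_coe]

lemma sum_pow_fixed (n q : ℕ) :
    ∑ σ : Equiv.Perm (Fin n), (univ.filter (fun x => σ x = x)).card ^ q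
      = ∑ k ∈ range (n + 1), k ^ q * n.choose k * numDerangements (n - k) := by
  classical
  rw [← Finset.sum_fiberwise_of_maps_to
    (g := fun σ : Equiv.Perm (Fin n) => univ.filter (fun x => σ x = x))
    (fun σ _ => Finset.mem_univ _) (fun σ => (univ.filter (fun x => σ x = x)).card ^ q)]
  -- now sum over S : Finset (Fin n)
  have step1 : ∀ S : Finset (Fin n),
      ∑ σ ∈ univ.filter (fun σ : Equiv.Perm (Fin n) => univ.filter (fun x => σ x = x) = S),
        (univ.filter (fun x => σ x = x)).card ^ q
      = S.card ^ q * numDerangements (n - S.card) := by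
    intro S
    rw [Finset.sum_congr rfl (fun σ hσ => by
      rw [(Finset.mem_filter.1 hσ).2]), Finset.sum_const, card_perm_fixed, smul_eq_mul, mul_comm]
  rw [Finset.sum_congr rfl (fun S _ => step1 S)]
  -- group by cardinality
  rw [← Finset.sum_fiberwise_of_maps_to (g := fun S : Finset (Fin n) => S.card)
    (fun S _ => Finset.mem_range.2 (Nat.lt_succ_of_le (by simpa using Finset.card_le_univ S)))
    (fun S => S.card ^ q * numDerangements (n - S.card))]
  refine Finset.sum_congr rfl fun k hk => ?_
  rw [Finset.sum_congr rfl (fun S hS => by rw [(Finset.mem_filter.1 hS).2]), Finset.sum_const,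
    smul_eq_mul]
  have hfil : univ.filter (fun S : Finset (Fin n) => S.card = k) = (univ : Finset (Fin n)).powersetCard k := by
    rw [Finset.powersetCard_eq_filter, Finset.powerset_univ]
  rw [hfil, Finset.card_powersetCard, Finset.card_univ, Fintype.card_fin]
  ring

open Finset Equiv Function


variable {q n : ℕ}

/-- kernel partition of a function -/
noncomputable def ker (f : Fin q → Fin n) : Finpartition (Finset.univ : Finset (Fin q)) := by
  classical exact Finpartition.ofSetoid (Setoid.ker f)

lemma mem_part_ker (f : Fin q → Fin n) (a b : Fin q) :
    b ∈ (ker f).part a ↔ f a = f b := by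
  classical
  unfold ker
  rw [Finpartition.mem_part_ofSetoid_iff_rel]
  exact Setoid.ker_def

lemma part_ext {α : Type*} [DecidableEq α] [Fintype α] (P Q : Finpartition (univ : Finset α))
    (h : ∀ a, P.part a = Q.part a) : P = Q := by
  ext t
  constructor
  · intro ht
    obtain ⟨a, _, rfl⟩ := P.part_surjOn ht
    exact h a ▸ Q.part_mem.2 (mem_univ a)
  · intro ht
    obtain ⟨a, _, rfl⟩ := Q.part_surjOn ht
    exact (h a).symm ▸ P.part_mem.2 (mem_univ a)

lemma ker_eq_iff (f : Fin q → Fin n) (P : Finpartition (univ : Finset (Fin q))) :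
    ker f = P ↔ ∀ a b, (f a = f b ↔ b ∈ P.part a) := by
  constructor
  · rintro rfl a b
    exact (mem_part_ker f a b).symm
  · intro h
    refine part_ext _ _ fun a => ?_
    ext b
    rw [mem_part_ker, h a b]

/-- the map from embeddings of parts to functions with kernel `P` -/
noncomputable def psi (P : Finpartition (univ : Finset (Fin q))) (g : ↥P.parts ↪ Fin n) :
    Fin q → Fin n :=
  fun a => g ⟨P.part a, P.part_mem.2 (mem_univ a)⟩

lemma ker_psi (P : Finpartition (univ : Finset (Fin q))) (g : ↥P.parts ↪ Fin n) :
    ker (psi P g) = P := by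
  rw [ker_eq_iff]
  intro a b
  unfold psi
  rw [g.injective.eq_iff, Subtype.mk.injEq,
    P.mem_part_iff_part_eq_part (mem_univ b) (mem_univ a)]
  exact ⟨fun h' => h'.symm, fun h' => h'.symm⟩

lemma card_fiber_ker (P : Finpartition (univ : Finset (Fin q))) :
    Fintype.card {f : Fin q → Fin n // ker f = P} = n.descFactorial P.parts.card := by
  classical
  have hbij : Function.Bijective (fun g : ↥P.parts ↪ Fin n =>
      (⟨psi P g, ker_psi P g⟩ : {f : Fin q → Fin n // ker f = P})) := by
    constructor
    · intro g g' hgg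
      have hfun : psi P g = psi P g' := congrArg Subtype.val hgg
      refine DFunLike.ext _ _ fun t => ?_
      obtain ⟨a, hat⟩ := P.nonempty_of_mem_parts t.2
      have h1 : (⟨P.part a, P.part_mem.2 (mem_univ a)⟩ : ↥P.parts) = t :=
        Subtype.ext (P.part_eq_of_mem t.2 hat)
      calc (g t : Fin n) = g ⟨P.part a, P.part_mem.2 (mem_univ a)⟩ := by rw [h1]
        _ = psi P g a := rfl
        _ = psi P g' a := by rw [hfun]
        _ = g' ⟨P.part a, P.part_mem.2 (mem_univ a)⟩ := rfl
        _ = g' t := by rw [h1]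
    · rintro ⟨f, hf⟩
      rw [ker_eq_iff] at hf
      -- choose representatives
      have hrep : ∀ t : ↥P.parts, ∃ a : Fin q, a ∈ t.1 := fun t =>
        P.nonempty_of_mem_parts t.2
      choose rep hrep' using hrep
      have hginj : Function.Injective (fun t : ↥P.parts => f (rep t)) := by
        intro t t' htt
        simp only at htt
        have h1 : rep t' ∈ P.part (rep t) := (hf (rep t) (rep t')).1 htt
        have h2 : P.part (rep t) = t.1 := P.part_eq_of_mem t.2 (hrep' t)
        rw [h2] at h1
        exact Subtype.ext (P.eq_of_mem_parts t.2 t'.2 h1 (hrep' t'))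
      refine ⟨⟨fun t => f (rep t), hginj⟩, ?_⟩
      apply Subtype.ext
      funext a
      show f (rep ⟨P.part a, P.part_mem.2 (mem_univ a)⟩) = f a
      have h1 : rep ⟨P.part a, P.part_mem.2 (mem_univ a)⟩ ∈ P.part a :=
        hrep' ⟨P.part a, P.part_mem.2 (mem_univ a)⟩
      exact ((hf a _).2 h1).symm
  rw [← Fintype.card_congr (Equiv.ofBijective _ hbij), Fintype.card_embedding_eq,
    Fintype.card_fin, Fintype.card_coe]

lemma card_image_of_ker (f : Fin q → Fin n) (P : Finpartition (univ : Finset (Fin q)))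
    (hf : ker f = P) : (univ.image f).card = P.parts.card := by
  classical
  rw [ker_eq_iff] at hf
  symm
  have hrep : ∀ t : Finset (Fin q), t ∈ P.parts → ∃ a : Fin q, a ∈ t := fun t ht =>
    P.nonempty_of_mem_parts ht
  choose rep hrep' using hrep
  refine Finset.card_bij (fun t ht => f (rep t ht)) (fun t ht => Finset.mem_image_of_mem _ (mem_univ _))
    ?_ ?_
  · intro t ht t' ht' htt
    have h1 : rep t' ht' ∈ P.part (rep t ht) := (hf _ _).1 htt
    rw [P.part_eq_of_mem ht (hrep' t ht)] at h1
    exact P.eq_of_mem_parts ht ht' h1 (hrep' t' ht')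
  · intro b hb
    obtain ⟨a, _, rfl⟩ := Finset.mem_image.1 hb
    refine ⟨P.part a, P.part_mem.2 (mem_univ a), ?_⟩
    exact ((hf a _).2 (hrep' _ (P.part_mem.2 (mem_univ a)))).symm

lemma card_parts_le (P : Finpartition (univ : Finset (Fin q))) : P.parts.card ≤ q := by
  simpa using P.card_parts_le_card

lemma card_fun_into (S : Finset (Fin n)) :
    S.card ^ q = (univ.filter (fun f : Fin q → Fin n => ∀ j, f j ∈ S)).card := by
  classical
  rw [← Fintype.card_subtype]
  rw [Fintype.card_congr (Equiv.subtypePiEquivPi (p := fun (_ : Fin q) (b : Fin n) => b ∈ S))]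
  rw [Fintype.card_pi]
  simp [Fintype.card_coe]

lemma card_perm_fixing (T : Finset (Fin n)) :
    (univ.filter (fun σ : Equiv.Perm (Fin n) => ∀ x ∈ T, σ x = x)).card
      = (n - T.card).factorial := by
  classical
  rw [← Fintype.card_subtype]
  have e1 : Equiv.Perm {x : Fin n // x ∉ T} ≃ {σ : Equiv.Perm (Fin n) // ∀ x ∈ T, σ x = x} :=
    (Equiv.Perm.subtypeEquivSubtypePerm (fun x => x ∉ T)).trans
      (Equiv.subtypeEquivRight (fun σ => by simp [not_not]))
  rw [← Fintype.card_congr e1, Fintype.card_perm, Fintype.card_subtype_compl,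
    Fintype.card_fin, Fintype.card_coe]

lemma sum_pow_fixed_eq_bell (hqn : q ≤ n) :
    ∑ σ : Equiv.Perm (Fin n), (univ.filter (fun x => σ x = x)).card ^ q
      = n.factorial * Bell q := by
  classical
  have step1 : ∀ σ : Equiv.Perm (Fin n),
      (univ.filter (fun x => σ x = x)).card ^ q
        = ∑ f : Fin q → Fin n, if (∀ x ∈ univ.image f, σ x = x) then 1 else 0 := by
    intro σ
    rw [card_fun_into, Finset.card_filter]
    refine Finset.sum_congr rfl fun f _ => ?_
    congr 1
    simp only [eq_iff_iff]
    constructor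
    · intro hh x hx
      obtain ⟨j, _, rfl⟩ := Finset.mem_image.1 hx
      have := hh j
      simpa [Finset.mem_filter] using this
    · intro hh j
      simp only [Finset.mem_filter, Finset.mem_univ, true_and]
      exact hh (f j) (Finset.mem_image_of_mem f (mem_univ j))
  rw [Finset.sum_congr rfl (fun σ _ => step1 σ), Finset.sum_comm]
  have step2 : ∀ f : Fin q → Fin n,
      (∑ σ : Equiv.Perm (Fin n), if (∀ x ∈ univ.image f, σ x = x) then 1 else 0)
        = (n - (univ.image f).card).factorial := by
    intro f
    rw [← Finset.card_filter, card_perm_fixing]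
  rw [Finset.sum_congr rfl (fun f _ => step2 f)]
  -- group by kernel partition
  rw [← Finset.sum_fiberwise_of_maps_to (g := fun f : Fin q → Fin n => ker f)
    (fun f _ => Finset.mem_univ _) (fun f => (n - (univ.image f).card).factorial)]
  have step3 : ∀ P : Finpartition (univ : Finset (Fin q)),
      ∑ f ∈ univ.filter (fun f : Fin q → Fin n => ker f = P),
        (n - (univ.image f).card).factorial = n.factorial := by
    intro P
    rw [Finset.sum_congr rfl (fun f hf => by
      rw [card_image_of_ker f P (Finset.mem_filter.1 hf).2])]
    rw [Finset.sum_const, smul_eq_mul, ← Fintype.card_subtype, card_fiber_ker]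
    rw [mul_comm]
    exact Nat.factorial_mul_descFactorial ((card_parts_le P).trans hqn)
  rw [Finset.sum_congr rfl (fun P _ => step3 P), Finset.sum_const, smul_eq_mul,
    Finset.card_univ, mul_comm]
  rfl

lemma derangements_rat {k n : ℕ} (hkn : k ≤ n) :
    ∑ i ∈ Finset.range (n - k + 1), (-1 : ℚ) ^ i * ((n.factorial : ℚ) / (k.factorial * i.factorial))
      = (n.choose k : ℚ) * (numDerangements (n - k) : ℚ) := by
  have hD := numDerangements_sum (n - k)
  have hDq : ((numDerangements (n - k) : ℤ) : ℚ)
      = ((∑ i ∈ Finset.range (n - k + 1),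
          (-1 : ℤ) ^ i * Nat.ascFactorial (i + 1) ((n - k) - i) : ℤ) : ℚ) := by
    exact_mod_cast congrArg (fun z : ℤ => (z : ℚ)) hD
  push_cast at hDq
  rw [hDq, Finset.mul_sum]
  refine Finset.sum_congr rfl fun i hi => ?_
  have him : i ≤ n - k := by
    have := Finset.mem_range.1 hi; omega
  have hA : (i.factorial : ℚ) * (Nat.ascFactorial (i + 1) ((n - k) - i) : ℚ)
      = ((n - k).factorial : ℚ) := by
    have := Nat.factorial_mul_ascFactorial i ((n - k) - i)
    rw [Nat.add_sub_cancel' him] at this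
    exact_mod_cast this
  have hC : (n.choose k : ℚ) * (k.factorial : ℚ) * ((n - k).factorial : ℚ) = (n.factorial : ℚ) := by
    exact_mod_cast Nat.choose_mul_factorial_mul_factorial hkn
  have hk0 : (k.factorial : ℚ) ≠ 0 := Nat.cast_ne_zero.2 (Nat.factorial_ne_zero k)
  have hi0 : (i.factorial : ℚ) ≠ 0 := Nat.cast_ne_zero.2 (Nat.factorial_ne_zero i)
  have hm0 : ((n - k).factorial : ℚ) ≠ 0 := Nat.cast_ne_zero.2 (Nat.factorial_ne_zero _)
  field_simp
  linear_combination (-(n.choose k : ℚ) * (k.factorial : ℚ)) * hA - hC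


theorem stmt19 (q n : ℕ) (h : max q 1 ≤ n) :
    (n.factorial : ℚ) * Bell q =
      ∑ k ∈ Finset.range (n + 1), ∑ l ∈ Finset.range ((k - 1) * q / k + 1),
        ∑ i ∈ Finset.range (n - k + 1),
          (-1 : ℚ) ^ (l + i) * ((n.factorial : ℚ) / (k.factorial * i.factorial)) *
            q.choose l * ((k * (q - l)).choose q) := by
  classical
  have hqn : q ≤ n := le_trans (le_max_left q 1) h
  have hsplit : ∀ k ∈ Finset.range (n + 1),
      (∑ l ∈ Finset.range ((k - 1) * q / k + 1), ∑ i ∈ Finset.range (n - k + 1),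
        (-1 : ℚ) ^ (l + i) * ((n.factorial : ℚ) / (k.factorial * i.factorial)) *
          q.choose l * ((k * (q - l)).choose q))
      = (k : ℚ) ^ q * ((n.choose k : ℚ) * (numDerangements (n - k) : ℚ)) := by
    intro k hk
    have hk' : k ≤ n := Nat.lt_succ_iff.1 (Finset.mem_range.1 hk)
    have hprod : (∑ l ∈ Finset.range ((k - 1) * q / k + 1), ∑ i ∈ Finset.range (n - k + 1),
        (-1 : ℚ) ^ (l + i) * ((n.factorial : ℚ) / (k.factorial * i.factorial)) *
          q.choose l * ((k * (q - l)).choose q))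
        = (∑ l ∈ Finset.range ((k - 1) * q / k + 1),
            (-1 : ℚ) ^ l * q.choose l * ((k * (q - l)).choose q)) *
          (∑ i ∈ Finset.range (n - k + 1),
            (-1 : ℚ) ^ i * ((n.factorial : ℚ) / (k.factorial * i.factorial))) := by
      rw [Finset.sum_mul_sum]
      refine Finset.sum_congr rfl fun l _ => Finset.sum_congr rfl fun i _ => ?_
      rw [pow_add]
      ring
    rw [hprod, vassilev_trunc, vassilev_full, derangements_rat hk']
  rw [Finset.sum_congr rfl hsplit]
  have hN : n.factorial * Bell q
      = ∑ k ∈ Finset.range (n + 1), k ^ q * n.choose k * numDerangements (n - k) :=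
    (sum_pow_fixed_eq_bell hqn).symm.trans (sum_pow_fixed n q)
  calc (n.factorial : ℚ) * Bell q = ((n.factorial * Bell q : ℕ) : ℚ) := by push_cast; ring
    _ = _ := by
        rw [hN]
        push_cast
        exact Finset.sum_congr rfl fun k _ => by ring
end
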